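/- Let γ : [0, s₀] → ℝ² be a C² unit-speed plane curve with curvature K(s) ≥ 0, K nonincreasing radius of curvature (K'(s) ≥ 0), and T(s) = γ'(s) having positive components on (0, s₀). Let R(s) = 1/K(s) ∈ (0, ∞], N = T^⊥, and define for each s the half-open segment Σ(s) = [γ(s), γ(s) + R(s)N(s)). Then for any 0 ≤ s₁ < s₂ ≤ s₀, the segments Σ(s₁) and Σ(s₂) are disjoint; consequently the map M(r,s) = γ(s) + rN(s) is injective on Q = {(r,s) : 0 ≤ r < R(s), 0 ≤ s ≤ s₀}. -/

import Mathlib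

/-- The signed curvature K = α'β'' − β'α'' of a unit-speed plane curve. -/
noncomputable def curv9 (α' β' α'' β'' : ℝ → ℝ) (s : ℝ) : ℝ :=
  α' s * β'' s - β' s * α'' s

/-- The half-open normal segment Σ(s) = [γ(s), γ(s) + R(s)N(s)), with
R = 1/K (R = ∞ when K = 0): its points are γ(s) + rN(s) with 0 ≤ r and
r·K(s) < 1. -/
noncomputable def seg9 (α β α' β' α'' β'' : ℝ → ℝ) (s : ℝ) : Set (ℝ × ℝ) :=
  {P | ∃ r : ℝ, 0 ≤ r ∧ r * curv9 α' β' α'' β'' s < 1 ∧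
    P = (α s + r * (-β' s), β s + r * α' s)}

-- Key lemma: a common point of two normal segments yields a contradiction.
set_option maxHeartbeats 1600000 in
lemma key9 (s₀ : ℝ) (hs₀ : 0 < s₀) (α β α' β' α'' β'' K' : ℝ → ℝ)
    (hα : ∀ s, HasDerivAt α (α' s) s) (hβ : ∀ s, HasDerivAt β (β' s) s)
    (hα' : ∀ s, HasDerivAt α' (α'' s) s) (hβ' : ∀ s, HasDerivAt β' (β'' s) s)
    (hunit : ∀ s, α' s ^ 2 + β' s ^ 2 = 1)
    (hK : ∀ s ∈ Set.Icc (0:ℝ) s₀, 0 ≤ curv9 α' β' α'' β'' s)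
    (hKd : ∀ s, HasDerivAt (curv9 α' β' α'' β'') (K' s) s)
    (hK' : ∀ s ∈ Set.Icc (0:ℝ) s₀, 0 ≤ K' s)
    (hT : ∀ s ∈ Set.Ioo (0:ℝ) s₀, 0 < α' s ∧ 0 < β' s)
    (s₁ s₂ r₁ r₂ : ℝ) (hs₁ : 0 ≤ s₁) (h12 : s₁ < s₂) (hs₂ : s₂ ≤ s₀)
    (hr₁ : 0 ≤ r₁) (hr₁K : r₁ * curv9 α' β' α'' β'' s₁ < 1)
    (hr₂ : 0 ≤ r₂) (hr₂K : r₂ * curv9 α' β' α'' β'' s₂ < 1)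
    (eA : α s₁ + r₁ * (-β' s₁) = α s₂ + r₂ * (-β' s₂))
    (eB : β s₁ + r₁ * α' s₁ = β s₂ + r₂ * α' s₂) : False := by
  set Kf := curv9 α' β' α'' β'' with hKf
  -- basic derivative identities
  have hdot : ∀ s, α' s * α'' s + β' s * β'' s = 0 := by
    intro s
    have h1 : HasDerivAt (fun s => α' s ^ 2 + β' s ^ 2)
        (2 * (α' s * α'' s + β' s * β'' s)) s := by
      have := ((hα' s).pow 2).add ((hβ' s).pow 2)
      convert this using 1
      · rfl
      · rfl
      · rfl
      simp only [Nat.cast_ofNat, show (2:ℕ) - 1 = 1 by norm_num, pow_one]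
      ring
    have h2 : HasDerivAt (fun s : ℝ => α' s ^ 2 + β' s ^ 2) 0 s := by
      have he : (fun s : ℝ => α' s ^ 2 + β' s ^ 2) = fun _ => (1:ℝ) := funext hunit
      rw [he]; exact hasDerivAt_const _ _
    have := h1.unique h2
    linarith
  have hα'' : ∀ s, α'' s = -(Kf s) * β' s := by
    intro s
    rw [hKf]; unfold curv9
    linear_combination α' s * hdot s - α'' s * hunit s
  have hβ'' : ∀ s, β'' s = Kf s * α' s := by
    intro s
    rw [hKf]; unfold curv9
    linear_combination β' s * hdot s - β'' s * hunit s
  -- continuity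
  have hαc : Continuous α := continuous_iff_continuousAt.mpr fun s => (hα s).continuousAt
  have hβc : Continuous β := continuous_iff_continuousAt.mpr fun s => (hβ s).continuousAt
  have hα'c : Continuous α' := continuous_iff_continuousAt.mpr fun s => (hα' s).continuousAt
  have hβ'c : Continuous β' := continuous_iff_continuousAt.mpr fun s => (hβ' s).continuousAt
  have hKc : Continuous Kf := continuous_iff_continuousAt.mpr fun s => (hKd s).continuousAt
  -- nonnegativity of tangent components on [0, s₀]
  have hclose : Set.Icc (0:ℝ) s₀ ⊆ closure (Set.Ioo (0:ℝ) s₀) := by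
    rw [closure_Ioo hs₀.ne]
  have hα'nn : ∀ s ∈ Set.Icc (0:ℝ) s₀, 0 ≤ α' s := by
    intro s hs
    exact closure_minimal (fun x hx => (hT x hx).1.le)
      (isClosed_le continuous_const hα'c) (hclose hs)
  have hβ'nn : ∀ s ∈ Set.Icc (0:ℝ) s₀, 0 ≤ β' s := by
    intro s hs
    exact closure_minimal (fun x hx => (hT x hx).2.le)
      (isClosed_le continuous_const hβ'c) (hclose hs)
  -- monotonicity of curvature
  have hKmono : MonotoneOn Kf (Set.Icc (0:ℝ) s₀) := by
    apply monotoneOn_of_deriv_nonneg (convex_Icc _ _) hKc.continuousOn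
      (fun x _ => (hKd x).differentiableAt.differentiableWithinAt)
    intro x hx
    rw [interior_Icc] at hx
    rw [(hKd x).deriv]
    exact hK' x ⟨hx.1.le, hx.2.le⟩
  -- subset facts
  have hsub : Set.Icc s₁ s₂ ⊆ Set.Icc (0:ℝ) s₀ := Set.Icc_subset_Icc hs₁ hs₂
  have hIoo : Set.Ioo s₁ s₂ ⊆ Set.Ioo (0:ℝ) s₀ :=
    Set.Ioo_subset_Ioo hs₁ hs₂
  have hmem₁ : s₁ ∈ Set.Icc (0:ℝ) s₀ := ⟨hs₁, h12.le.trans hs₂⟩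
  have hmem₂ : s₂ ∈ Set.Icc (0:ℝ) s₀ := ⟨hs₁.trans h12.le, hs₂⟩
  -- strict monotonicity of α and β on [s₁, s₂]
  have hαmono : StrictMonoOn α (Set.Icc s₁ s₂) := by
    apply strictMonoOn_of_deriv_pos (convex_Icc _ _) hαc.continuousOn
    intro x hx
    rw [interior_Icc] at hx
    rw [(hα x).deriv]
    exact (hT x (hIoo hx)).1
  have hβmono : StrictMonoOn β (Set.Icc s₁ s₂) := by
    apply strictMonoOn_of_deriv_pos (convex_Icc _ _) hβc.continuousOn
    intro x hx
    rw [interior_Icc] at hx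
    rw [(hβ x).deriv]
    exact (hT x (hIoo hx)).2
  have hA : α s₁ < α s₂ :=
    hαmono (Set.left_mem_Icc.mpr h12.le) (Set.right_mem_Icc.mpr h12.le) h12
  have hB : β s₁ < β s₂ :=
    hβmono (Set.left_mem_Icc.mpr h12.le) (Set.right_mem_Icc.mpr h12.le) h12
  -- the crossing inequalities
  have e1 : r₂ * β' s₂ - r₁ * β' s₁ = α s₂ - α s₁ := by linear_combination eA
  have e2 : r₁ * α' s₁ - r₂ * α' s₂ = β s₂ - β s₁ := by linear_combination eB
  have e1' : r₁ * β' s₁ < r₂ * β' s₂ := by linarith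
  have e2' : r₂ * α' s₂ < r₁ * α' s₁ := by linarith
  have hb₁ : 0 ≤ β' s₁ := hβ'nn s₁ hmem₁
  have ha₂ : 0 ≤ α' s₂ := hα'nn s₂ hmem₂
  have ha₁ : 0 ≤ α' s₁ := hα'nn s₁ hmem₁
  have hb₂ : 0 ≤ β' s₂ := hβ'nn s₂ hmem₂
  have hprod : r₁ * β' s₁ * (r₂ * α' s₂) < r₂ * β' s₂ * (r₁ * α' s₁) :=
    mul_lt_mul'' e1' e2' (mul_nonneg hr₁ hb₁) (mul_nonneg hr₂ ha₂)
  have hS₁ : 0 < α' s₁ * β' s₂ - β' s₁ * α' s₂ := by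
    by_contra hcon
    push_neg at hcon
    nlinarith [mul_nonneg hr₁ hr₂]
  -- auxiliary functions
  obtain ⟨p, hp⟩ : ∃ p : ℝ, p = α s₁ - r₁ * β' s₁ := ⟨_, rfl⟩
  obtain ⟨q, hq⟩ : ∃ q : ℝ, q = β s₁ + r₁ * α' s₁ := ⟨_, rfl⟩
  obtain ⟨C, hCdef⟩ : ∃ C : ℝ → ℝ, C = fun τ => α' s₂ * α' τ + β' s₂ * β' τ := ⟨_, rfl⟩
  obtain ⟨S, hSdef⟩ : ∃ S : ℝ → ℝ, S = fun τ => α' τ * β' s₂ - β' τ * α' s₂ := ⟨_, rfl⟩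
  obtain ⟨h, hhdef⟩ : ∃ h : ℝ → ℝ, h = fun τ => (p - α τ) * α' τ + (q - β τ) * β' τ := ⟨_, rfl⟩
  obtain ⟨ρ, hρdef⟩ : ∃ ρ : ℝ → ℝ, ρ = fun τ => -(p - α τ) * β' τ + (q - β τ) * α' τ := ⟨_, rfl⟩
  -- their derivatives
  have hC : ∀ τ, HasDerivAt C (Kf τ * S τ) τ := by
    intro τ
    rw [hCdef]
    have := ((hα' τ).const_mul (α' s₂)).add ((hβ' τ).const_mul (β' s₂))
    convert this using 1
    · rfl
    · rfl
    · rfl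
    rw [hα'' τ, hβ'' τ, hSdef]
    ring
  have hS : ∀ τ, HasDerivAt S (-(Kf τ) * C τ) τ := by
    intro τ
    rw [hSdef]
    have := ((hα' τ).mul_const (β' s₂)).sub ((hβ' τ).mul_const (α' s₂))
    convert this using 1
    · rfl
    · rfl
    · rfl
    rw [hα'' τ, hβ'' τ, hCdef]
    ring
  have hh : ∀ τ, HasDerivAt h (Kf τ * ρ τ - 1) τ := by
    intro τ
    rw [hhdef]
    have := (((hasDerivAt_const τ p).sub (hα τ)).mul (hα' τ)).add
      (((hasDerivAt_const τ q).sub (hβ τ)).mul (hβ' τ))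
    convert this using 1
    · rfl
    · rfl
    · rfl
    rw [hα'' τ, hβ'' τ, hρdef]
    simp only [Pi.sub_apply, Pi.neg_apply]
    have := hunit τ
    ring_nf
    nlinarith [hunit τ]
  have hρ : ∀ τ, HasDerivAt ρ (-(Kf τ) * h τ) τ := by
    intro τ
    rw [hρdef]
    have := (((hasDerivAt_const τ p).sub (hα τ)).neg.mul (hβ' τ)).add
      (((hasDerivAt_const τ q).sub (hβ τ)).mul (hα' τ))
    convert this using 1
    · rfl
    · rfl
    · rfl
    rw [hα'' τ, hβ'' τ, hhdef]
    simp only [Pi.sub_apply, Pi.neg_apply]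
    ring

  -- endpoint values
  have hh₁ : h s₁ = 0 := by rw [hhdef]; simp only [hp, hq]; ring
  have hρ₁ : ρ s₁ = r₁ := by
    rw [hρdef]; simp only [hp, hq]; linear_combination r₁ * hunit s₁
  have hh₂ : h s₂ = 0 := by
    rw [hhdef]; simp only [hp, hq]
    linear_combination (α' s₂) * eA + (β' s₂) * eB
  have hρ₂ : ρ s₂ = r₂ := by
    rw [hρdef]; simp only [hp, hq]
    linear_combination (-(β' s₂)) * eA + (α' s₂) * eB + r₂ * hunit s₂
  have hS₂ : S s₂ = 0 := by rw [hSdef]; ring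
  have hC₂ : C s₂ = 1 := by rw [hCdef]; linear_combination hunit s₂
  have hS₁pos : 0 < S s₁ := by rw [hSdef]; exact hS₁
  have hCnn : ∀ τ ∈ Set.Icc s₁ s₂, 0 ≤ C τ := by
    intro τ hτ
    have h1 := hα'nn τ (hsub hτ)
    have h2 := hβ'nn τ (hsub hτ)
    rw [hCdef]
    exact add_nonneg (mul_nonneg ha₂ h1) (mul_nonneg hb₂ h2)
  have hC₁nn : 0 ≤ C s₁ := hCnn s₁ (Set.left_mem_Icc.mpr h12.le)
  -- S is antitone on [s₁, s₂], hence nonnegative there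
  have hScont : Continuous S := continuous_iff_continuousAt.mpr fun τ => (hS τ).continuousAt
  have hSanti : AntitoneOn S (Set.Icc s₁ s₂) := by
    apply antitoneOn_of_deriv_nonpos (convex_Icc _ _) hScont.continuousOn
      (fun x _ => (hS x).differentiableAt.differentiableWithinAt)
    intro x hx
    rw [interior_Icc] at hx
    rw [(hS x).deriv]
    exact mul_nonpos_of_nonpos_of_nonneg
      (neg_nonpos.mpr (hK x (hsub ⟨hx.1.le, hx.2.le⟩)))
      (hCnn x ⟨hx.1.le, hx.2.le⟩)
  have hSnn : ∀ τ ∈ Set.Icc s₁ s₂, 0 ≤ S τ := by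
    intro τ hτ
    have := hSanti hτ (Set.right_mem_Icc.mpr h12.le) hτ.2
    rw [hS₂] at this
    exact this
  -- the function Φ
  obtain ⟨Φ, hΦdef⟩ : ∃ Φ : ℝ → ℝ, Φ = fun τ => Kf s₂ * (C τ * h τ + S τ * ρ τ) - S τ := ⟨_, rfl⟩
  have hΦ : ∀ τ, HasDerivAt Φ ((Kf τ - Kf s₂) * C τ) τ := by
    intro τ
    rw [hΦdef]
    have := ((((hC τ).mul (hh τ)).add ((hS τ).mul (hρ τ))).const_mul (Kf s₂)).sub (hS τ)
    convert this using 1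
    · rfl
    · rfl
    · rfl
    ring
  have hΦcont : Continuous Φ := continuous_iff_continuousAt.mpr fun τ => (hΦ τ).continuousAt
  have hΦanti : AntitoneOn Φ (Set.Icc s₁ s₂) := by
    apply antitoneOn_of_deriv_nonpos (convex_Icc _ _) hΦcont.continuousOn
      (fun x _ => (hΦ x).differentiableAt.differentiableWithinAt)
    intro x hx
    rw [interior_Icc] at hx
    rw [(hΦ x).deriv]
    have hxmem : x ∈ Set.Icc s₁ s₂ := ⟨hx.1.le, hx.2.le⟩
    exact mul_nonpos_of_nonpos_of_nonneg
      (sub_nonpos.mpr (hKmono (hsub hxmem) hmem₂ hx.2.le))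
      (hCnn x hxmem)
  have hΦin : Φ s₂ ≤ Φ s₁ :=
    hΦanti (Set.left_mem_Icc.mpr h12.le) (Set.right_mem_Icc.mpr h12.le) h12.le
  have hΦ₁ : Φ s₁ = Kf s₂ * (S s₁ * r₁) - S s₁ := by
    rw [hΦdef]; simp only [hh₁, hρ₁]; ring
  have hΦ₂ : Φ s₂ = 0 := by
    rw [hΦdef]; simp only [hh₂, hρ₂, hS₂, hC₂]; ring
  have hKr₁ : 1 ≤ Kf s₂ * r₁ := by
    rw [hΦ₁, hΦ₂] at hΦin
    nlinarith [hS₁pos]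
  -- the function Ψ
  obtain ⟨Ψ, hΨdef⟩ : ∃ Ψ : ℝ → ℝ, Ψ = fun τ => Kf s₂ * (C τ * ρ τ - S τ * h τ) - C τ := ⟨_, rfl⟩
  have hΨ : ∀ τ, HasDerivAt Ψ ((Kf s₂ - Kf τ) * S τ) τ := by
    intro τ
    rw [hΨdef]
    have := ((((hC τ).mul (hρ τ)).sub ((hS τ).mul (hh τ))).const_mul (Kf s₂)).sub (hC τ)
    convert this using 1
    · rfl
    · rfl
    · rfl
    ring
  have hΨcont : Continuous Ψ := continuous_iff_continuousAt.mpr fun τ => (hΨ τ).continuousAt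
  have hΨmono : MonotoneOn Ψ (Set.Icc s₁ s₂) := by
    apply monotoneOn_of_deriv_nonneg (convex_Icc _ _) hΨcont.continuousOn
      (fun x _ => (hΨ x).differentiableAt.differentiableWithinAt)
    intro x hx
    rw [interior_Icc] at hx
    rw [(hΨ x).deriv]
    have hxmem : x ∈ Set.Icc s₁ s₂ := ⟨hx.1.le, hx.2.le⟩
    exact mul_nonneg (sub_nonneg.mpr (hKmono (hsub hxmem) hmem₂ hx.2.le)) (hSnn x hxmem)
  have hΨin : Ψ s₁ ≤ Ψ s₂ :=
    hΨmono (Set.left_mem_Icc.mpr h12.le) (Set.right_mem_Icc.mpr h12.le) h12.le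
  have hΨ₁ : Ψ s₁ = Kf s₂ * (C s₁ * r₁) - C s₁ := by
    rw [hΨdef]; simp only [hh₁, hρ₁]; ring
  have hΨ₂ : Ψ s₂ = Kf s₂ * r₂ - 1 := by
    rw [hΨdef]; simp only [hh₂, hρ₂, hS₂, hC₂]; ring
  rw [hΨ₁, hΨ₂] at hΨin
  nlinarith [mul_nonneg hC₁nn (sub_nonneg.mpr hKr₁)]

/-- Let γ = (α, β) be a C² unit-speed plane curve on [0, s₀] with curvature
K ≥ 0, K' ≥ 0 on [0, s₀] and tangent components positive on (0, s₀). Then for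
0 ≤ s₁ < s₂ ≤ s₀ the normal segments Σ(s₁) and Σ(s₂) are disjoint;
consequently M(r,s) = γ(s) + rN(s) is injective on
Q = {(r,s) : 0 ≤ r, r·K(s) < 1, 0 ≤ s ≤ s₀}. -/
theorem stmt_9 (s₀ : ℝ) (hs₀ : 0 < s₀) (α β α' β' α'' β'' K' : ℝ → ℝ)
    (hα : ∀ s, HasDerivAt α (α' s) s) (hβ : ∀ s, HasDerivAt β (β' s) s)
    (hα' : ∀ s, HasDerivAt α' (α'' s) s) (hβ' : ∀ s, HasDerivAt β' (β'' s) s)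
    (hunit : ∀ s, α' s ^ 2 + β' s ^ 2 = 1)
    (hK : ∀ s ∈ Set.Icc (0:ℝ) s₀, 0 ≤ curv9 α' β' α'' β'' s)
    (hKd : ∀ s, HasDerivAt (curv9 α' β' α'' β'') (K' s) s)
    (hK' : ∀ s ∈ Set.Icc (0:ℝ) s₀, 0 ≤ K' s)
    (hT : ∀ s ∈ Set.Ioo (0:ℝ) s₀, 0 < α' s ∧ 0 < β' s) :
    (∀ s₁ s₂ : ℝ, 0 ≤ s₁ → s₁ < s₂ → s₂ ≤ s₀ →
      Disjoint (seg9 α β α' β' α'' β'' s₁) (seg9 α β α' β' α'' β'' s₂)) ∧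
    Set.InjOn (fun p : ℝ × ℝ => ((α p.2 + p.1 * (-β' p.2), β p.2 + p.1 * α' p.2) : ℝ × ℝ))
      {p : ℝ × ℝ | 0 ≤ p.1 ∧ p.1 * curv9 α' β' α'' β'' p.2 < 1 ∧
        0 ≤ p.2 ∧ p.2 ≤ s₀} := by
  constructor
  · intro s₁ s₂ hs₁ h12 hs₂
    refine Set.disjoint_left.mpr ?_
    rintro P ⟨r₁, hr₁, hr₁K, rfl⟩ ⟨r₂, hr₂, hr₂K, hP2⟩
    rw [Prod.mk.injEq] at hP2
    obtain ⟨eA, eB⟩ := hP2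
    exact key9 s₀ hs₀ α β α' β' α'' β'' K' hα hβ hα' hβ' hunit hK hKd hK' hT
      s₁ s₂ r₁ r₂ hs₁ h12 hs₂ hr₁ hr₁K hr₂ hr₂K eA eB
  · intro x hx y hy hxy
    obtain ⟨hx1, hx2, hx3, hx4⟩ := hx
    obtain ⟨hy1, hy2, hy3, hy4⟩ := hy
    simp only [Prod.mk.injEq] at hxy
    obtain ⟨eA, eB⟩ := hxy
    rcases lt_trichotomy x.2 y.2 with hlt | heqt | hgt
    · exact (key9 s₀ hs₀ α β α' β' α'' β'' K' hα hβ hα' hβ' hunit hK hKd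
        hK' hT x.2 y.2 x.1 y.1 hx3 hlt hy4 hx1 hx2 hy1 hy2 eA eB).elim
    · rw [heqt] at eA eB
      have hz : (x.1 - y.1) * β' y.2 = 0 := by linear_combination -eA
      have hz2 : (x.1 - y.1) * α' y.2 = 0 := by linear_combination eB
      have hsq : (x.1 - y.1) ^ 2 = 0 := by
        linear_combination (x.1 - y.1) * α' y.2 * hz2 + (x.1 - y.1) * β' y.2 * hz -
          (x.1 - y.1) ^ 2 * hunit y.2
      have h1 : x.1 = y.1 := by
        have := sq_eq_zero_iff.mp hsq
        linarith
      exact Prod.ext h1 heqt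
    · exact (key9 s₀ hs₀ α β α' β' α'' β'' K' hα hβ hα' hβ' hunit hK hKd
        hK' hT y.2 x.2 y.1 x.1 hy3 hgt hx4 hy1 hy2 hx1 hx2 eA.symm eB.symm).elim
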